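/- Let L be a relational first-order language, let U be a countably infinite ultrahomogeneous L-structure with the pigeonhole property, and let A be a countably infinite L-structure such that every finite substructure of A embeds into U (Age(A) ⊆ Age(U)). Let u : ℕ → U and a : ℕ → A be bijections. Then there is an L-embedding e : A ↪ U such that the map n ↦ u⁻¹(e (a n)) is strictly increasing. -/

import Mathlib

open FirstOrder

def HasPigeonhole (L : Language) (U : Type*) [L.Structure U] : Prop :=
  ∀ S : Set U, (∃ f : U ↪[L] U, Set.range f = S) ∨ (∃ f : U ↪[L] U, Set.range f = Sᶜ)

universe u

set_option linter.unusedSectionVars false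

namespace PHaux

open FirstOrder Language Structure Set

variable {U A : Type u} {L : Language} [L.IsRelational] [L.Structure U] [L.Structure A]

/-- `w` restricted to indices `< n` gives a partial embedding pattern matching `a`. -/
def PE (L : Language) [L.Structure U] [L.Structure A] (a : ℕ ≃ A) (n : ℕ) (w : ℕ → U) : Prop :=
  (∀ i < n, ∀ j < n, w i = w j → i = j) ∧
  ∀ (k : ℕ) (R : L.Relations k) (t : Fin k → ℕ), (∀ m, t m < n) →
    (RelMap R (fun m => w (t m)) ↔ RelMap R (fun m => a (t m)))

theorem PE.congr {a : ℕ ≃ A} {n : ℕ} {w w' : ℕ → U} (h : PE L a n w)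
    (hww' : ∀ i < n, w i = w' i) : PE L a n w' := by
  constructor
  · intro i hi j hj hij
    exact h.1 i hi j hj (by rw [hww' i hi, hww' j hj, hij])
  · intro k R t ht
    have : (fun m => w' (t m)) = fun m => w (t m) := funext fun m => (hww' _ (ht m)).symm
    rw [this]
    exact h.2 k R t ht

theorem PE_zero (hage : L.age A ⊆ L.age U) (a : ℕ ≃ A) (w : ℕ → U) : PE L a 0 w := by
  constructor
  · intro i hi; omega
  · intro k R t ht
    cases k with
    | succ k' => exact absurd (ht 0) (Nat.not_lt_zero _)
    | zero =>
      -- use the empty substructure of A and its embedding into U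
      have hmem : (⟨↥(Substructure.closure L (∅ : Set A)), inferInstance⟩ :
          CategoryTheory.Bundled L.Structure) ∈ L.age A := by
        refine ⟨(Substructure.fg_iff_structure_fg _).1 ?_, ⟨(Substructure.closure L ∅).subtype⟩⟩
        rw [Substructure.fg_iff_finite]
        have h2 : ((Substructure.closure L (∅ : Set A)) : Set A).Finite := by
          rw [Substructure.closure_eq_of_isRelational L ∅]; exact Set.finite_empty
        exact h2.to_subtype
      obtain ⟨_, ⟨j⟩⟩ := hage hmem
      have h1 := StrongHomClass.map_rel j R (fun m => (Fin.elim0 m))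
      have e1 : (fun m => w (t m)) = (⇑j ∘ fun m => (Fin.elim0 m)) :=
        funext fun m => Fin.elim0 m
      have e2 : (fun m => a (t m) : Fin 0 → A) =
          (fun m => ((Fin.elim0 m : ↥(Substructure.closure L (∅ : Set A))) : A)) :=
        funext fun m => Fin.elim0 m
      rw [e1, h1]
      show RelMap R (fun m => ((Fin.elim0 m : ↥(Substructure.closure L (∅ : Set A))) : A)) ↔ _
      rw [← e2]


theorem mem_age_of_finite {s : Set A} (hs : s.Finite) :
    (⟨↥(Substructure.closure L s), inferInstance⟩ :
      CategoryTheory.Bundled L.Structure) ∈ L.age A := by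
  refine ⟨(Substructure.fg_iff_structure_fg _).1 ?_, ⟨(Substructure.closure L s).subtype⟩⟩
  rw [Substructure.fg_iff_finite]
  have h2 : ((Substructure.closure L s : L.Substructure A) : Set A).Finite := by
    rw [Substructure.closure_eq_of_isRelational L s]; exact hs
  exact h2.to_subtype

theorem ext_exists (hU : L.IsUltrahomogeneous U) (hage : L.age A ⊆ L.age U)
    (a : ℕ ≃ A) (n : ℕ) (w : ℕ → U) (hw : PE L a n w) :
    ∃ x : U, PE L a (n + 1) (Function.update w n x) := by
  classical
  set s : Set A := a '' Set.Iio (n + 1) with hs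
  set s' : Set A := a '' Set.Iio n with hs'
  set Sb : L.Substructure A := Substructure.closure L s with hSb
  set Sb' : L.Substructure A := Substructure.closure L s' with hSb'
  have hmemSb : ∀ i < n + 1, a i ∈ Sb := fun i hi =>
    Substructure.subset_closure ⟨i, hi, rfl⟩
  have hmemSb' : ∀ i < n, a i ∈ Sb' := fun i hi =>
    Substructure.subset_closure ⟨i, hi, rfl⟩
  have hidx : ∀ y : Sb', a.symm (y : A) < n := by
    intro y
    have hy : (y : A) ∈ s' := by
      exact (Substructure.mem_closure_iff_of_isRelational L s' _).1 y.2
    obtain ⟨i, hi, hia⟩ := hy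
    rw [← hia, Equiv.symm_apply_apply]; exact hi
  have haval : ∀ y : Sb', a (a.symm (y : A)) = (y : A) := fun y => a.apply_symm_apply _
  obtain ⟨_, ⟨j⟩⟩ := hage (mem_age_of_finite ((Set.finite_Iio _).image a))
  haveI : Nonempty (Sb ↪[L] U) := ⟨j⟩
  have S_FG : Structure.FG L Sb' := by
    refine (Substructure.fg_iff_structure_fg _).1 ?_
    rw [Substructure.fg_iff_finite]
    have h2 : ((Sb' : L.Substructure A) : Set A).Finite := by
      rw [hSb', Substructure.closure_eq_of_isRelational]
      exact (Set.finite_Iio _).image a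
    exact h2.to_subtype
  have hle : Sb' ≤ Sb := Substructure.closure_mono
    (Set.image_mono (f := a) (fun i (hi : i < n) => lt_trans hi (lt_add_one n)))
  let f : Sb' ↪[L] U :=
    { toFun := fun y => w (a.symm (y : A))
      inj' := by
        intro y z hyz
        have h := hw.1 _ (hidx y) _ (hidx z) hyz
        apply Subtype.ext
        rw [← haval y, ← haval z, h]
      map_fun' := fun {k} F => isEmptyElim F
      map_rel' := by
        intro k R x
        have h1 := hw.2 k R (fun m => a.symm ((x m : A))) (fun m => hidx (x m))
        simp only [Equiv.apply_symm_apply] at h1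
        exact h1 }
  obtain ⟨f', hf'⟩ := hU.extend_embedding S_FG f (Substructure.inclusion hle)
  refine ⟨f' ⟨a n, hmemSb n (lt_add_one n)⟩, ?_⟩
  have hkey : ∀ i (hi : i < n + 1),
      Function.update w n (f' ⟨a n, hmemSb n (lt_add_one n)⟩) i = f' ⟨a i, hmemSb i hi⟩ := by
    intro i hi
    rcases Nat.lt_succ_iff_lt_or_eq.1 hi with hil | rfl
    · rw [Function.update_of_ne (Nat.ne_of_lt hil)]
      have h2 : w i = f ⟨a i, hmemSb' i hil⟩ := by
        show w i = w (a.symm (a i))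
        rw [Equiv.symm_apply_apply]
      rw [h2, hf']
      show f' (Substructure.inclusion hle ⟨a i, hmemSb' i hil⟩) = _
      exact congrArg f' (Subtype.ext rfl)
    · rw [Function.update_self]
  constructor
  · intro i hi j hj hij
    rw [hkey i hi, hkey j hj] at hij
    have h3 := Subtype.ext_iff.1 (f'.injective hij)
    exact a.injective h3
  · intro k R t ht
    have e1 : (fun m => Function.update w n (f' ⟨a n, hmemSb n (lt_add_one n)⟩) (t m)) =
        (⇑f' ∘ fun m => (⟨a (t m), hmemSb _ (ht m)⟩ : Sb)) :=
      funext fun m => hkey _ (ht m)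
    rw [e1, StrongHomClass.map_rel]
    exact Iff.rfl

theorem key (hU : L.IsUltrahomogeneous U) (hP : HasPigeonhole L U)
    (hage : L.age A ⊆ L.age U) [Infinite U] (u : ℕ ≃ U) (a : ℕ ≃ A) (n : ℕ) (w : ℕ → U)
    (hw : PE L a n w) :
    ∃ x : U, PE L a (n + 1) (Function.update w n x) ∧ ∀ i < n, u.symm (w i) < u.symm x := by
  classical
  set V : Set U := {x | PE L a (n + 1) (Function.update w n x)} with hV
  have hVinf : V.Infinite := by
    rcases hP V with ⟨f, hf⟩ | ⟨f, hf⟩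
    · rw [← hf]
      exact Set.infinite_range_of_injective f.injective
    · exfalso
      have hwV : ∀ i < n, w i ∈ Set.range f := by
        intro i hi
        rw [hf]
        intro hmem
        have hupd : Function.update w n (w i) i = Function.update w n (w i) n := by
          rw [Function.update_of_ne (Nat.ne_of_lt hi), Function.update_self]
        have h := (hmem : PE L a (n + 1) _).1 i (lt_trans hi (lt_add_one n)) n
          (lt_add_one n) hupd
        omega
      set w₀ : ℕ → U := fun i => if h : i < n then (hwV i h).choose else u 0 with hw₀
      have hfw₀ : ∀ i < n, f (w₀ i) = w i := by
        intro i hi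
        simp only [hw₀, dif_pos hi]
        exact (hwV i hi).choose_spec
      have hPE₀ : PE L a n w₀ := by
        constructor
        · intro i hi j hj hij
          exact hw.1 i hi j hj (by rw [← hfw₀ i hi, ← hfw₀ j hj, hij])
        · intro k R t ht
          have h1 := StrongHomClass.map_rel f R (fun m => w₀ (t m))
          have e1 : (⇑f ∘ fun m => w₀ (t m)) = fun m => w (t m) :=
            funext fun m => hfw₀ _ (ht m)
          rw [e1] at h1
          exact h1.symm.trans (hw.2 k R t ht)
      obtain ⟨z, hz⟩ := ext_exists hU hage a n w₀ hPE₀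
      have e2 : ∀ i, i < n + 1 →
          f (Function.update w₀ n z i) = Function.update w n (f z) i := by
        intro i hi
        rcases Nat.lt_succ_iff_lt_or_eq.1 hi with hil | rfl
        · rw [Function.update_of_ne (Nat.ne_of_lt hil),
            Function.update_of_ne (Nat.ne_of_lt hil)]
          exact hfw₀ i hil
        · rw [Function.update_self, Function.update_self]
      have hfzV : f z ∈ V := by
        constructor
        · intro i hi j hj hij
          refine hz.1 i hi j hj (f.injective ?_)
          rw [e2 i hi, e2 j hj]
          exact hij
        · intro k R t ht
          have h1 := StrongHomClass.map_rel f R (fun m => Function.update w₀ n z (t m))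
          have e3 : (⇑f ∘ fun m => Function.update w₀ n z (t m)) =
              fun m => Function.update w n (f z) (t m) := funext fun m => e2 _ (ht m)
          rw [e3] at h1
          exact h1.trans (hz.2 k R t ht)
      have hr : f z ∈ Set.range f := ⟨z, rfl⟩
      rw [hf] at hr
      exact hr hfzV
  have hBfin : (⋃ i ∈ Set.Iio n, {x : U | u.symm x ≤ u.symm (w i)}).Finite := by
    refine Set.Finite.biUnion (Set.finite_Iio n) ?_
    intro i _
    have he : {x : U | u.symm x ≤ u.symm (w i)} = u.symm ⁻¹' (Set.Iic (u.symm (w i))) := rfl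
    rw [he]
    exact (Set.finite_Iic _).preimage (u.symm.injective.injOn)
  obtain ⟨x, hxV, hxB⟩ := (hVinf.diff hBfin).nonempty
  refine ⟨x, hxV, fun i hi => ?_⟩
  by_contra hle
  exact hxB (Set.mem_biUnion hi (not_lt.1 hle))

end PHaux

theorem exists_enumeration_respecting_embedding {L : Language} [L.IsRelational]
    {U A : Type u} [L.Structure U] [L.Structure A]
    [Countable U] [Infinite U] [Countable A] [Infinite A]
    (hU : L.IsUltrahomogeneous U) (hP : HasPigeonhole L U)
    (hage : L.age A ⊆ L.age U)
    (u : ℕ ≃ U) (a : ℕ ≃ A) :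
    ∃ e : A ↪[L] U, StrictMono (fun n => u.symm (e (a n))) := by
  classical
  obtain ⟨step, hstep⟩ : ∃ step : (ℕ → U) → ℕ → U, ∀ w n, PHaux.PE L a n w →
      PHaux.PE L a (n + 1) (Function.update w n (step w n)) ∧
      ∀ i < n, u.symm (w i) < u.symm (step w n) := by
    refine ⟨fun w n => if h : ∃ x, PHaux.PE L a (n + 1) (Function.update w n x) ∧
        ∀ i < n, u.symm (w i) < u.symm x then h.choose else u 0, ?_⟩
    intro w n hw
    have h' : ∃ x, PHaux.PE L a (n + 1) (Function.update w n x) ∧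
        ∀ i < n, u.symm (w i) < u.symm x := PHaux.key hU hP hage u a n w hw
    simpa only [dif_pos h'] using h'.choose_spec
  let W : ℕ → ℕ → U := fun n =>
    Nat.rec (fun _ => u 0) (fun m Wm => Function.update Wm m (step Wm m)) n
  have hWs : ∀ n, W (n + 1) = Function.update (W n) n (step (W n) n) := fun n => rfl
  have hInv : ∀ n, PHaux.PE L a n (W n) ∧
      ∀ i j, i < j → j < n → u.symm (W n i) < u.symm (W n j) := by
    intro n
    induction n with
    | zero => exact ⟨PHaux.PE_zero hage a _, fun i j _ hj => absurd hj (Nat.not_lt_zero _)⟩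
    | succ m ih =>
      obtain ⟨h1, h2⟩ := hstep (W m) m ih.1
      rw [hWs m]
      refine ⟨h1, ?_⟩
      intro i j hij hj
      rcases Nat.lt_succ_iff_lt_or_eq.1 hj with hjl | rfl
      · rw [Function.update_of_ne (Nat.ne_of_lt (lt_trans hij hjl)),
          Function.update_of_ne (Nat.ne_of_lt hjl)]
        exact ih.2 i j hij hjl
      · rw [Function.update_of_ne (Nat.ne_of_lt hij), Function.update_self]
        exact h2 i hij
  have hcoh : ∀ n i, i < n → W n i = W (i + 1) i := by
    intro n
    induction n with
    | zero => intro i hi; omega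
    | succ m ih =>
      intro i hi
      rcases Nat.lt_succ_iff_lt_or_eq.1 hi with hil | rfl
      · rw [hWs m, Function.update_of_ne (Nat.ne_of_lt hil)]
        exact ih i hil
      · rfl
  let winf : ℕ → U := fun i => W (i + 1) i
  have hPE : ∀ n, PHaux.PE L a n winf := fun n =>
    PHaux.PE.congr (hInv n).1 (fun i hi => hcoh n i hi)
  have hmono : StrictMono (fun i => u.symm (winf i)) := by
    intro i j hij
    have h := (hInv (j + 1)).2 i j hij (lt_add_one j)
    rw [hcoh (j + 1) i (lt_trans hij (lt_add_one j))] at h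
    exact h
  have hwinj : Function.Injective winf := fun i j h =>
    hmono.injective (congrArg u.symm h)
  let e : A ↪[L] U :=
    { toFun := fun y => winf (a.symm y)
      inj' := fun y z h => a.symm.injective (hwinj h)
      map_fun' := fun {k} F => isEmptyElim F
      map_rel' := by
        intro k R x
        have hb : ∀ m, a.symm (x m) < (Finset.univ.sup fun m => a.symm (x m)) + 1 :=
          fun m => Nat.lt_succ_of_le (Finset.le_sup (f := fun m => a.symm (x m)) (Finset.mem_univ m))
        have h1 := (hPE ((Finset.univ.sup fun m => a.symm (x m)) + 1)).2 k R
          (fun m => a.symm (x m)) hb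
        simp only [Equiv.apply_symm_apply] at h1
        exact h1 }
  refine ⟨e, ?_⟩
  intro i j hij
  show u.symm (e (a i)) < u.symm (e (a j))
  have he : ∀ m : ℕ, e (a m) = winf m := by
    intro m
    show winf (a.symm (a m)) = winf m
    rw [Equiv.symm_apply_apply]
  rw [he i, he j]
  exact hmono hij
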